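/- arXiv:2106.02924 — 2 statements merged into one kernel-verified Lean document; each statement's English description precedes it below -/
import Mathlib

section
/- Let G be a locally compact abelian group with Haar measure μ. If X, Y are nonempty compact subsets of G with μ(X·Y) < μ(X) + μ(Y), then there exists a compact subgroup H of G with μ(H) ≥ μ(X) + μ(Y) − μ(X·Y); in particular μ(X·Y) ≥ min{μ(X) + μ(Y) − sup_H μ(H), μ(G)} where H ranges over proper compact subgroups of G with μ(H) ≤ μ(X·Y). -/
open MeasureTheory Set Pointwise
open scoped NNReal ENNReal

lemma kneser_aux_iInter {G : Type*} [CommGroup G] [TopologicalSpace G] [IsTopologicalGroup G]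
    [LocallyCompactSpace G] [T2Space G] [MeasurableSpace G] [BorelSpace G]
    (μ : Measure G) [μ.IsHaarMeasure]
    {ι : Type*} [Nonempty ι] (T : ι → Set G) (hd : Directed (· ⊇ ·) T)
    (hc : ∀ i, IsCompact (T i)) {r : ℝ≥0∞} (hr : μ (⋂ i, T i) < r) :
    ∃ i, μ (T i) < r := by
  classical
  set ν : Measure G := Measure.haar with hν
  set c : ℝ≥0 := Measure.haarScalarFactor μ ν with hcdef
  have key : ∀ s : Set G, IsCompact (closure s) → μ s = (c : ℝ≥0∞) * ν s := by
    intro s hs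
    rw [Measure.measure_isMulInvariant_eq_smul_of_isCompact_closure μ ν hs,
      ENNReal.smul_def, smul_eq_mul]
  have keyc : ∀ s : Set G, IsCompact s → μ s = (c : ℝ≥0∞) * ν s := fun s hs =>
    key s (by rwa [hs.isClosed.closure_eq])
  rcases eq_or_ne c 0 with hc0 | hc0
  · refine ⟨Classical.arbitrary ι, ?_⟩
    have := keyc _ (hc (Classical.arbitrary ι))
    rw [hc0] at this
    simp only [ENNReal.coe_zero, zero_mul] at this
    exact this ▸ lt_of_le_of_lt zero_le hr
  · have hUcomp : IsCompact (⋂ i, T i) :=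
      (hc (Classical.arbitrary ι)).of_isClosed_subset
        (isClosed_iInter fun i => (hc i).isClosed) (iInter_subset _ _)
    rw [keyc _ hUcomp] at hr
    have hν' : ν (⋂ i, T i) < r / c := by
      rw [ENNReal.lt_div_iff_mul_lt (Or.inl (by exact_mod_cast hc0))
        (Or.inl ENNReal.coe_ne_top), mul_comm]
      exact hr
    obtain ⟨W, hWU, hWopen, hWlt⟩ := Set.exists_isOpen_lt_of_lt (μ := ν) _ _ hν'
    obtain ⟨i, hi⟩ := exists_subset_nhds_of_isCompact hd hc
      (fun x hx => hWopen.mem_nhds (hWU hx))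
    refine ⟨i, ?_⟩
    rw [keyc _ (hc i)]
    calc (c : ℝ≥0∞) * ν (T i) ≤ (c : ℝ≥0∞) * ν W := by
          exact mul_le_mul_right (measure_mono hi) _
      _ < r := ENNReal.mul_lt_of_lt_div' hWlt

/-- Kneser-type theorem for locally compact abelian groups: if
`μ(X·Y) < μ X + μ Y` then some compact subgroup `H` has
`μ H ≥ μ X + μ Y − μ(X·Y)`; in particular
`μ(X·Y) ≥ min (μ X + μ Y − sup_H μ H) (μ G)`, the sup ranging over proper
compact subgroups `H` with `μ H ≤ μ(X·Y)`. -/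
theorem kneser_abelian
    {G : Type*} [CommGroup G] [TopologicalSpace G] [IsTopologicalGroup G]
    [LocallyCompactSpace G] [T2Space G]
    [MeasurableSpace G] [BorelSpace G]
    (μ : Measure G) [μ.IsHaarMeasure]
    (X Y : Set G) (hXne : X.Nonempty) (hYne : Y.Nonempty)
    (hX : IsCompact X) (hY : IsCompact Y)
    (hlt : μ (X * Y) < μ X + μ Y) :
    (∃ H : Subgroup G, IsCompact (H : Set G) ∧
      μ X + μ Y - μ (X * Y) ≤ μ (H : Set G)) ∧
    min (μ X + μ Y -
        ⨆ H : {H : Subgroup G // H ≠ ⊤ ∧ IsCompact (H : Set G) ∧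
          μ (H : Set G) ≤ μ (X * Y)}, μ ((H : Subgroup G) : Set G))
      (μ Set.univ) ≤ μ (X * Y) := by
  classical
  set K : Set G := X * Y with hKdef
  have hKcomp : IsCompact K := hX.mul hY
  have hKtop : μ K ≠ ⊤ := hKcomp.measure_lt_top.ne
  have htot : μ X + μ Y ≠ ⊤ :=
    (ENNReal.add_lt_top.2 ⟨hX.measure_lt_top, hY.measure_lt_top⟩).ne
  have hsm : ∀ (g : G) (S : Set G), g • S = {g} * S := by
    intro g S
    rw [Set.singleton_mul]
    rfl
  -- the collection of pairs for Zorn's lemma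
  set P : Set (Set G × (Set G)ᵒᵈ) :=
    {p | IsCompact p.1 ∧ p.1.Nonempty ∧ IsCompact (OrderDual.ofDual p.2) ∧
      (OrderDual.ofDual p.2).Nonempty ∧ p.1 * (OrderDual.ofDual p.2) ⊆ K ∧
      μ X + μ Y ≤ μ p.1 + μ (OrderDual.ofDual p.2)} with hPdef
  have hbase : (X, OrderDual.toDual Y) ∈ P :=
    ⟨hX, hXne, hY, hYne, Set.Subset.rfl, le_rfl⟩
  -- every chain has an upper bound
  have hchain : ∀ c ⊆ P, IsChain (· ≤ ·) c → ∀ y ∈ c, ∃ ub ∈ P, ∀ z ∈ c, z ≤ ub := by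
    intro c hcP hch y hy
    haveI : Nonempty c := ⟨⟨y, hy⟩⟩
    set B' : Set G := ⋂ p : c, OrderDual.ofDual (p : Set G × (Set G)ᵒᵈ).2 with hB'
    have hdir : Directed (· ⊇ ·) (fun p : c => OrderDual.ofDual (p : Set G × (Set G)ᵒᵈ).2) := by
      intro p q
      rcases eq_or_ne p q with rfl | hpq
      · exact ⟨p, subset_rfl, subset_rfl⟩
      rcases hch.total p.2 q.2 with h | h
      · exact ⟨q, h.2, subset_rfl⟩
      · exact ⟨p, subset_rfl, h.2⟩
    have hBcomp : ∀ p : c, IsCompact (OrderDual.ofDual (p : Set G × (Set G)ᵒᵈ).2) :=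
      fun p => (hcP p.2).2.2.1
    have hB'ne : B'.Nonempty :=
      IsCompact.nonempty_iInter_of_directed_nonempty_isCompact_isClosed _ hdir
        (fun p => (hcP p.2).2.2.2.1) hBcomp (fun p => (hBcomp p).isClosed)
    obtain ⟨ylim, hylim⟩ := hB'ne
    have hB'comp : IsCompact B' :=
      (hBcomp ⟨y, hy⟩).of_isClosed_subset
        (isClosed_iInter fun p => (hBcomp p).isClosed) (iInter_subset _ _)
    set Kc : Set G := (· * ylim⁻¹) '' K with hKc
    have hKccomp : IsCompact Kc := hKcomp.image (continuous_mul_right _)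
    have hAsub : ∀ p : c, (p : Set G × (Set G)ᵒᵈ).1 ⊆ Kc := by
      intro p a ha
      have h1 : ylim ∈ OrderDual.ofDual (p : Set G × (Set G)ᵒᵈ).2 :=
        (iInter_subset _ p) hylim
      have h2 : a * ylim ∈ K := (hcP p.2).2.2.2.2.1 (Set.mul_mem_mul ha h1)
      exact ⟨a * ylim, h2, by group⟩
    set A' : Set G := closure (⋃ p : c, (p : Set G × (Set G)ᵒᵈ).1) with hA'
    have hA'sub : A' ⊆ Kc :=
      closure_minimal (iUnion_subset fun p => hAsub p) hKccomp.isClosed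
    have hA'comp : IsCompact A' :=
      hKccomp.of_isClosed_subset isClosed_closure hA'sub
    have hAmem : ∀ p : c, (p : Set G × (Set G)ᵒᵈ).1 ⊆ A' :=
      fun p => (Set.subset_iUnion (fun q : c => (q : Set G × (Set G)ᵒᵈ).1) p).trans
        subset_closure
    have hA'ne : A'.Nonempty := by
      obtain ⟨a, ha⟩ := (hcP hy).2.1
      exact ⟨a, hAmem ⟨y, hy⟩ ha⟩
    have hprod : A' * B' ⊆ K := by
      rintro z ⟨a, ha, b, hb, rfl⟩
      have hmaps : Set.MapsTo (· * b) (⋃ p : c, (p : Set G × (Set G)ᵒᵈ).1) K := by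
        rintro x hx
        obtain ⟨p, hp⟩ := Set.mem_iUnion.1 hx
        have hbB : b ∈ OrderDual.ofDual (p : Set G × (Set G)ᵒᵈ).2 := (iInter_subset _ p) hb
        exact (hcP p.2).2.2.2.2.1 (Set.mul_mem_mul hp hbB)
      have := map_mem_closure (continuous_mul_right b) ha hmaps
      rwa [hKcomp.isClosed.closure_eq] at this
    have hmeas : μ X + μ Y ≤ μ A' + μ B' := by
      by_contra hcon
      push_neg at hcon
      have hA'top : μ A' ≠ ⊤ := hA'comp.measure_lt_top.ne
      have hA'lt : μ A' < μ X + μ Y := (le_add_right le_rfl).trans_lt hcon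
      have h1 : μ B' < (μ X + μ Y) - μ A' := by
        rw [(ENNReal.cancel_of_ne hA'top).lt_tsub_iff_right]
        rwa [add_comm] at hcon
      obtain ⟨p, hp⟩ := kneser_aux_iInter μ _ hdir hBcomp h1
      have h2 : μ X + μ Y ≤ μ (p : Set G × (Set G)ᵒᵈ).1 +
          μ (OrderDual.ofDual (p : Set G × (Set G)ᵒᵈ).2) := (hcP p.2).2.2.2.2.2
      have h3 : μ (p : Set G × (Set G)ᵒᵈ).1 ≤ μ A' := measure_mono (hAmem p)
      have h4 : μ (p : Set G × (Set G)ᵒᵈ).1 +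
          μ (OrderDual.ofDual (p : Set G × (Set G)ᵒᵈ).2) <
          μ A' + ((μ X + μ Y) - μ A') :=
        ENNReal.add_lt_add_of_le_of_lt
          ((h3.trans_lt hA'lt).trans (lt_top_iff_ne_top.mpr htot)).ne h3 hp
      rw [add_tsub_cancel_of_le hA'lt.le] at h4
      exact absurd (h2.trans_lt h4) (lt_irrefl _)
    refine ⟨(A', OrderDual.toDual B'), ⟨hA'comp, hA'ne, hB'comp, ⟨ylim, hylim⟩, hprod, hmeas⟩, ?_⟩
    intro z hz
    exact ⟨hAmem ⟨z, hz⟩, iInter_subset (fun p : c => OrderDual.ofDual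
      (p : Set G × (Set G)ᵒᵈ).2) ⟨z, hz⟩⟩
  -- apply Zorn's lemma
  obtain ⟨m, hm, hmax⟩ := zorn_le_nonempty₀ P hchain _ hbase
  obtain ⟨hAcomp, hAne, hBcomp, hBne, hABK, hABm⟩ := hmax.1
  set A : Set G := m.1 with hAdef
  set B : Set G := OrderDual.ofDual m.2 with hBdef
  -- the key transform step
  have hstep : ∀ a ∈ A, ∀ b ∈ B, (a * b⁻¹) • B ⊆ A := by
    intro a ha b hb
    set e : G := a * b⁻¹ with hedef
    set A' : Set G := A ∪ e • B with hA'def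
    set B' : Set G := B ∩ e⁻¹ • A with hB'def
    have heB : IsCompact (e • B) := hBcomp.smul e
    have heA : IsCompact (e⁻¹ • A) := hAcomp.smul e⁻¹
    have hbB' : b ∈ B' := by
      refine ⟨hb, ?_⟩
      rw [Set.mem_smul_set_iff_inv_smul_mem, inv_inv, smul_eq_mul, hedef,
        mul_assoc, inv_mul_cancel, mul_one]
      exact ha
    have hprod' : A' * B' ⊆ K := by
      rw [hA'def, Set.union_mul]
      refine Set.union_subset
        ((Set.mul_subset_mul_left Set.inter_subset_left).trans hABK) ?_
      refine (Set.mul_subset_mul_left Set.inter_subset_right).trans ?_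
      have h2 : (e • B) * (e⁻¹ • A) = A * B := by
        rw [hsm, hsm, mul_mul_mul_comm, Set.singleton_mul_singleton,
          mul_inv_cancel, Set.singleton_one, one_mul, mul_comm]
      rw [h2]
      exact hABK
    have hCmeas : MeasurableSet (e⁻¹ • A) := heA.isClosed.measurableSet
    have hM1 : μ A' = μ A + μ ((e • B) \ A) := by
      have h : A' = A ∪ ((e • B) \ A) := by rw [Set.union_diff_self]
      rw [h, measure_union disjoint_sdiff_self_right
        (heB.isClosed.measurableSet.diff hAcomp.isClosed.measurableSet)]
    have hM2 : μ ((e • B) \ A) = μ (B \ e⁻¹ • A) := by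
      have h : (e • B) \ A = e • (B \ e⁻¹ • A) := by
        rw [Set.smul_set_sdiff, smul_inv_smul]
      rw [h, measure_smul]
    have hM3 : μ (B ∩ e⁻¹ • A) + μ (B \ e⁻¹ • A) = μ B := measure_inter_add_diff B hCmeas
    have hmeas' : μ X + μ Y ≤ μ A' + μ B' := by
      calc μ X + μ Y ≤ μ A + μ B := hABm
        _ = μ A + (μ (B ∩ e⁻¹ • A) + μ (B \ e⁻¹ • A)) := by rw [hM3]
        _ = (μ A + μ (B \ e⁻¹ • A)) + μ (B ∩ e⁻¹ • A) := by ring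
        _ = μ A' + μ B' := by rw [hM1, hM2, hB'def]
    have hmem' : (A', OrderDual.toDual B') ∈ P :=
      ⟨hAcomp.union heB, hAne.mono Set.subset_union_left,
        hBcomp.inter_right heA.isClosed, ⟨b, hbB'⟩, hprod', hmeas'⟩
    have hle : m ≤ (A', OrderDual.toDual B') :=
      ⟨Set.subset_union_left, Set.inter_subset_left⟩
    have hge := hmax.2 hmem' hle
    exact fun x hx => hge.1 (Set.mem_union_right _ hx)
  -- build the subgroup
  obtain ⟨a₀, ha₀⟩ := hAne
  obtain ⟨b₀, hb₀⟩ := hBne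
  have hstab : ∀ a ∈ A, ∀ b ∈ B, ∀ x ∈ B, a * b⁻¹ * x ∈ A := by
    intro a ha b hb x hx
    exact hstep a ha b hb (Set.smul_mem_smul_set hx)
  set T : Set G := b₀⁻¹ • B with hTdef
  have hQ : ∀ g ∈ Subgroup.closure T, (∀ a ∈ A, a * g ∈ A) ∧ (∀ a ∈ A, a * g⁻¹ ∈ A) := by
    intro g hg
    induction hg using Subgroup.closure_induction with
    | mem x hx =>
        obtain ⟨bx, hbx, rfl⟩ := hx
        constructor
        · intro a ha
          have := hstab a ha b₀ hb₀ bx hbx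
          simpa [smul_eq_mul, mul_assoc] using this
        · intro a ha
          have := hstab a ha bx hbx b₀ hb₀
          have heq : a * (b₀⁻¹ • bx)⁻¹ = a * bx⁻¹ * b₀ := by
            simp [smul_eq_mul, mul_inv_rev, mul_assoc]
          rwa [heq]
    | one => simp
    | mul x y hx hy ihx ihy =>
        refine ⟨fun a ha => ?_, fun a ha => ?_⟩
        · rw [← mul_assoc]
          exact ihy.1 _ (ihx.1 a ha)
        · rw [mul_inv_rev, ← mul_assoc]
          exact ihx.2 _ (ihy.2 a ha)
    | inv x hx ih =>
        refine ⟨fun a ha => ih.2 a ha, fun a ha => ?_⟩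
        rw [inv_inv]
        exact ih.1 a ha
  set H : Subgroup G := (Subgroup.closure T).topologicalClosure with hHdef
  have hH1sub : ((Subgroup.closure T : Subgroup G) : Set G) ⊆ a₀⁻¹ • A := by
    intro g hg
    rw [Set.mem_smul_set_iff_inv_smul_mem, inv_inv, smul_eq_mul]
    exact (hQ g hg).1 a₀ ha₀
  have hHcl : (H : Set G) = closure ((Subgroup.closure T : Subgroup G) : Set G) := rfl
  have hHsub : (H : Set G) ⊆ a₀⁻¹ • A := by
    rw [hHcl]
    exact closure_minimal hH1sub (hAcomp.smul a₀⁻¹).isClosed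
  have hHcomp : IsCompact (H : Set G) :=
    (hAcomp.smul a₀⁻¹).of_isClosed_subset (hHcl ▸ isClosed_closure) hHsub
  have hμH_ge : μ B ≤ μ (H : Set G) := by
    have hTH : T ⊆ (H : Set G) := by
      rw [hHcl]
      exact (Subgroup.subset_closure).trans subset_closure
    calc μ B = μ T := by rw [hTdef, measure_smul]
      _ ≤ μ (H : Set G) := measure_mono hTH
  have hμA_le : μ A ≤ μ K := by
    have hsub : b₀ • A ⊆ K := by
      rintro x hx
      obtain ⟨a, ha, rfl⟩ := hx
      have h := hABK (Set.mul_mem_mul ha hb₀)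
      have heq : b₀ • a = a * b₀ := by rw [smul_eq_mul, mul_comm]
      show b₀ • a ∈ K
      rwa [heq]
    calc μ A = μ (b₀ • A) := (measure_smul μ b₀ A).symm
      _ ≤ μ K := measure_mono hsub
  have hμH_le : μ (H : Set G) ≤ μ K := by
    calc μ (H : Set G) ≤ μ (a₀⁻¹ • A) := measure_mono hHsub
      _ = μ A := measure_smul μ a₀⁻¹ A
      _ ≤ μ K := hμA_le
  have hdB : μ X + μ Y - μ K ≤ μ B := by
    rw [tsub_le_iff_left]
    calc μ X + μ Y ≤ μ A + μ B := hABm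
      _ ≤ μ K + μ B := add_le_add_left hμA_le _
  have hdH : μ X + μ Y - μ (X * Y) ≤ μ (H : Set G) := hdB.trans hμH_ge
  constructor
  · exact ⟨H, hHcomp, hdH⟩
  · by_cases huniv : μ (Set.univ : Set G) ≤ μ (X * Y)
    · exact min_le_of_right_le huniv
    · push_neg at huniv
      have hHne : H ≠ ⊤ := by
        intro h
        rw [h] at hμH_le
        simp only [Subgroup.coe_top] at hμH_le
        exact absurd hμH_le (not_le.2 huniv)
      refine min_le_of_left_le ?_
      have hSge : μ X + μ Y - μ (X * Y) ≤
          ⨆ H' : {H' : Subgroup G // H' ≠ ⊤ ∧ IsCompact (H' : Set G) ∧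
            μ (H' : Set G) ≤ μ (X * Y)}, μ ((H' : Subgroup G) : Set G) :=
        hdH.trans (le_iSup (fun H' : {H' : Subgroup G // H' ≠ ⊤ ∧
          IsCompact (H' : Set G) ∧ μ (H' : Set G) ≤ μ (X * Y)} =>
          μ ((H' : Subgroup G) : Set G)) ⟨H, hHne, hHcomp, hμH_le⟩)
      calc μ X + μ Y - ⨆ H' : {H' : Subgroup G // H' ≠ ⊤ ∧ IsCompact (H' : Set G) ∧
            μ (H' : Set G) ≤ μ (X * Y)}, μ ((H' : Subgroup G) : Set G)
          ≤ μ X + μ Y - (μ X + μ Y - μ (X * Y)) := tsub_le_tsub_left hSge _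
        _ = μ (X * Y) := ENNReal.sub_sub_cancel htot hlt.le
end

section
/- Let G be a locally compact group with left Haar measure μ, ν = μ⁻¹, and modular function Δ. Suppose X, Y are nonempty compact subsets of G, x₀ ∈ X maximizes Δ on X, y₀ ∈ Y minimizes Δ on Y. Then X* = x₀⁻¹·X ⊆ {g : Δ(g) ≤ 1}, Y* = Y·y₀⁻¹ ⊆ {g : Δ(g) ≥ 1}, the identity lies in X* ∩ Y*, and ν(X*)/ν(X*Y*) + μ(Y*)/μ(X*Y*) = ν(X)/ν(XY) + μ(Y)/μ(XY). -/
open MeasureTheory Set Pointwise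
open scoped NNReal ENNReal

private lemma cancel_toReal_div (c a b : ℝ≥0∞) (hc0 : c ≠ 0) (hct : c ≠ ⊤) :
    (c * a).toReal / (c * b).toReal = a.toReal / b.toReal := by
  rcases eq_or_ne a ⊤ with ha | ha
  · simp [ha, ENNReal.mul_top, hc0]
  rcases eq_or_ne b ⊤ with hb | hb
  · simp [hb, ENNReal.mul_top, hc0]
  rw [ENNReal.toReal_mul, ENNReal.toReal_mul,
    mul_div_mul_left _ _ (ENNReal.toReal_ne_zero.mpr ⟨hc0, hct⟩)]

private lemma measure_singleton_mul {G : Type*} [Group G] [TopologicalSpace G]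
    [IsTopologicalGroup G] [MeasurableSpace G] [BorelSpace G]
    (μ : Measure G) [μ.IsHaarMeasure] (g : G) (A : Set G) :
    μ ({g} * A) = μ A := by
  rw [show ({g} : Set G) * A = g • A by rw [← Set.singleton_smul, smul_eq_mul],
    measure_smul μ g A]

/-- Normalization step: translating `X` by `x₀⁻¹` on the left (where `x₀`
maximizes `Δ` on `X`) and `Y` by `y₀⁻¹` on the right (where `y₀` minimizes `Δ`
on `Y`) puts `X* ⊆ G_{≤1}`, `Y* ⊆ G_{≥1}`, `1 ∈ X* ∩ Y*`, and preserves the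
quantity `ν(X)/ν(XY) + μ(Y)/μ(XY)`. -/
theorem normalization_translates
    {G : Type*} [Group G] [TopologicalSpace G] [IsTopologicalGroup G]
    [LocallyCompactSpace G] [T2Space G]
    [MeasurableSpace G] [BorelSpace G]
    (μ : Measure G) [μ.IsHaarMeasure]
    (ν : Measure G) (hν : ∀ A : Set G, ν A = μ A⁻¹)
    (Δ : G → ℝ≥0) (hΔpos : ∀ g, 0 < Δ g) (hΔcont : Continuous Δ)
    (hΔhom : ∀ a b : G, Δ (a * b) = Δ a * Δ b)
    (hΔ : ∀ (g : G) (A : Set G), MeasurableSet A →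
      μ (A * {g}) = (Δ g : ENNReal) * μ A)
    (X Y : Set G) (hXne : X.Nonempty) (hYne : Y.Nonempty)
    (hX : IsCompact X) (hY : IsCompact Y)
    (x₀ : G) (hx₀ : x₀ ∈ X) (hx₀max : ∀ x ∈ X, Δ x ≤ Δ x₀)
    (y₀ : G) (hy₀ : y₀ ∈ Y) (hy₀min : ∀ y ∈ Y, Δ y₀ ≤ Δ y) :
    ({x₀⁻¹} : Set G) * X ⊆ {g : G | Δ g ≤ 1} ∧
    Y * ({y₀⁻¹} : Set G) ⊆ {g : G | 1 ≤ Δ g} ∧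
    (1 : G) ∈ (({x₀⁻¹} : Set G) * X) ∩ (Y * ({y₀⁻¹} : Set G)) ∧
    (ν (({x₀⁻¹} : Set G) * X)).toReal /
        (ν (({x₀⁻¹} : Set G) * X * (Y * ({y₀⁻¹} : Set G)))).toReal +
      (μ (Y * ({y₀⁻¹} : Set G))).toReal /
        (μ (({x₀⁻¹} : Set G) * X * (Y * ({y₀⁻¹} : Set G)))).toReal =
    (ν X).toReal / (ν (X * Y)).toReal +
      (μ Y).toReal / (μ (X * Y)).toReal := by
  -- Δ 1 = 1 and Δ (g⁻¹) = (Δ g)⁻¹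
  have hΔ1 : Δ 1 = 1 := by
    have h : Δ 1 * Δ 1 = Δ 1 * 1 := by rw [← hΔhom, mul_one, mul_one]
    exact mul_left_cancel₀ (hΔpos 1).ne' h
  have hΔinv : ∀ g : G, Δ g⁻¹ = (Δ g)⁻¹ := by
    intro g
    refine eq_inv_of_mul_eq_one_left ?_
    rw [← hΔhom, inv_mul_cancel, hΔ1]
  -- set inclusions
  refine ⟨?_, ?_, ?_, ?_⟩
  · rintro g hg
    rw [Set.singleton_mul] at hg
    obtain ⟨x, hx, rfl⟩ := hg
    have : Δ (x₀⁻¹ * x) = (Δ x₀)⁻¹ * Δ x := by rw [hΔhom, hΔinv]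
    rw [Set.mem_setOf_eq, this]
    calc (Δ x₀)⁻¹ * Δ x ≤ (Δ x₀)⁻¹ * Δ x₀ := mul_le_mul_right (hx₀max x hx) _
    _ = 1 := inv_mul_cancel₀ (hΔpos x₀).ne'
  · rintro g hg
    rw [Set.mul_singleton] at hg
    obtain ⟨y, hy, rfl⟩ := hg
    have : Δ (y * y₀⁻¹) = Δ y * (Δ y₀)⁻¹ := by rw [hΔhom, hΔinv]
    rw [Set.mem_setOf_eq, this]
    calc (1 : ℝ≥0) = Δ y₀ * (Δ y₀)⁻¹ := (mul_inv_cancel₀ (hΔpos y₀).ne').symm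
    _ ≤ Δ y * (Δ y₀)⁻¹ := mul_le_mul_left (hy₀min y hy) _
  · constructor
    · rw [Set.singleton_mul]
      exact ⟨x₀, hx₀, inv_mul_cancel x₀⟩
    · rw [Set.mul_singleton]
      exact ⟨y₀, hy₀, mul_inv_cancel y₀⟩
  -- the measure identity
  · have hXY : IsCompact (X * Y) := hX.mul hY
    have assoc : ({x₀⁻¹} : Set G) * X * (Y * {y₀⁻¹}) = {x₀⁻¹} * (X * Y) * {y₀⁻¹} := by
      simp only [mul_assoc]
    have key1 : ν (({x₀⁻¹} : Set G) * X) = (Δ x₀ : ℝ≥0∞) * ν X := by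
      rw [hν, hν, mul_inv_rev, Set.inv_singleton, inv_inv,
        hΔ x₀ X⁻¹ hX.measurableSet.inv]
    have key2 : ν (({x₀⁻¹} : Set G) * X * (Y * {y₀⁻¹})) = (Δ x₀ : ℝ≥0∞) * ν (X * Y) := by
      rw [assoc, hν, hν]
      have h1 : (({x₀⁻¹} : Set G) * (X * Y) * {y₀⁻¹})⁻¹ = {y₀} * ((X * Y)⁻¹ * {x₀}) := by
        simp only [mul_inv_rev, Set.inv_singleton, inv_inv, mul_assoc]
      rw [h1, measure_singleton_mul μ y₀ ((X * Y)⁻¹ * {x₀}),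
        hΔ x₀ (X * Y)⁻¹ hXY.measurableSet.inv]
    have key3 : μ (Y * ({y₀⁻¹} : Set G)) = (Δ y₀⁻¹ : ℝ≥0∞) * μ Y :=
      hΔ y₀⁻¹ Y hY.measurableSet
    have key4 : μ (({x₀⁻¹} : Set G) * X * (Y * {y₀⁻¹})) = (Δ y₀⁻¹ : ℝ≥0∞) * μ (X * Y) := by
      rw [assoc, hΔ y₀⁻¹ (({x₀⁻¹} : Set G) * (X * Y))
        ((isCompact_singleton.mul hXY).measurableSet),
        measure_singleton_mul μ x₀⁻¹ (X * Y)]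
    rw [key1, key2, key3, key4,
      cancel_toReal_div _ _ _ (by exact_mod_cast (hΔpos x₀).ne') ENNReal.coe_ne_top,
      cancel_toReal_div _ _ _ (by exact_mod_cast (hΔpos y₀⁻¹).ne') ENNReal.coe_ne_top]
end
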